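/- For ε ∈ ℝ^n with (x̄(ε), ȳ(ε)) ≠ (0,0), define g_j(ε) = (x̄(ε)cos(2πε_j) + ȳ(ε)sin(2πε_j))/(n(x̄(ε)² + ȳ(ε)²)) and, for s̄ ∈ ℝ^n, set s = s̄ − (Σ_i s̄_i)·g(ε). Then the map ε ↦ s (for fixed s̄) is invariant under common shifts and entrywise wrapping: replacing ε by w(ε + r·1) for any r ∈ ℝ leaves s unchanged. -/
import Mathlib

open Real Finset

/-- `ȳ(ε) = (1/n) Σ_j sin(2π ε_j)`. -/
noncomputable def ybar {n : ℕ} (ε : Fin n → ℝ) : ℝ :=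
  (1 / (n : ℝ)) * ∑ j : Fin n, Real.sin (2 * π * ε j)

/-- `x̄(ε) = (1/n) Σ_j cos(2π ε_j)`. -/
noncomputable def xbar {n : ℕ} (ε : Fin n → ℝ) : ℝ :=
  (1 / (n : ℝ)) * ∑ j : Fin n, Real.cos (2 * π * ε j)

/-- `θ(ε) = atan2(ȳ(ε), x̄(ε))`, realized as the complex argument of `x̄ + i ȳ`. -/
noncomputable def theta {n : ℕ} (ε : Fin n → ℝ) : ℝ :=
  Complex.arg ⟨xbar ε, ybar ε⟩

/-- The periodic CoM-free map `m(ε)_i = w(ε_i − θ(ε)/(2π))`, with `w` the fractional part. -/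
noncomputable def comFree {n : ℕ} (ε : Fin n → ℝ) : Fin n → ℝ :=
  fun i => Int.fract (ε i - theta ε / (2 * π))

/-- `g_j(ε) = (x̄ cos(2πε_j) + ȳ sin(2πε_j)) / (n(x̄² + ȳ²))`. -/
noncomputable def gfun {n : ℕ} (ε : Fin n → ℝ) (j : Fin n) : ℝ :=
  (xbar ε * Real.cos (2 * π * ε j) + ybar ε * Real.sin (2 * π * ε j)) /
    ((n : ℝ) * (xbar ε ^ 2 + ybar ε ^ 2))

lemma cos_two_pi_fract (x : ℝ) : Real.cos (2 * π * Int.fract x) = Real.cos (2 * π * x) := by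
  rw [Int.fract, mul_sub, show 2 * π * (⌊x⌋ : ℝ) = (⌊x⌋ : ℝ) * (2 * π) by ring,
    Real.cos_sub_int_mul_two_pi]

lemma sin_two_pi_fract (x : ℝ) : Real.sin (2 * π * Int.fract x) = Real.sin (2 * π * x) := by
  rw [Int.fract, mul_sub, show 2 * π * (⌊x⌋ : ℝ) = (⌊x⌋ : ℝ) * (2 * π) by ring,
    Real.sin_sub_int_mul_two_pi]

/-- The adjusted score `s = s̄ − (Σ_i s̄_i) g(ε)` is invariant under common shifts
combined with entrywise wrapping of `ε`. -/
theorem adjusted_score_periodic_translation_invariant {n : ℕ} (ε : Fin n → ℝ)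
    (hne : ¬(xbar ε = 0 ∧ ybar ε = 0)) (sbar : Fin n → ℝ) (r : ℝ) :
    (fun j => sbar j - (∑ i : Fin n, sbar i) * gfun (fun i => Int.fract (ε i + r)) j)
      = fun j => sbar j - (∑ i : Fin n, sbar i) * gfun ε j := by
  have key : ∀ j, gfun (fun i => Int.fract (ε i + r)) j = gfun ε j := by
    intro j
    have hx : xbar (fun i => Int.fract (ε i + r))
        = Real.cos (2 * π * r) * xbar ε - Real.sin (2 * π * r) * ybar ε := by
      simp only [xbar, ybar, cos_two_pi_fract, mul_add, Real.cos_add,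
        Finset.sum_sub_distrib, ← Finset.sum_mul]
      ring
    have hy : ybar (fun i => Int.fract (ε i + r))
        = Real.sin (2 * π * r) * xbar ε + Real.cos (2 * π * r) * ybar ε := by
      simp only [xbar, ybar, sin_two_pi_fract, mul_add, Real.sin_add,
        Finset.sum_add_distrib, ← Finset.sum_mul]
      ring
    have hc : Real.cos (2 * π * Int.fract (ε j + r))
        = Real.cos (2 * π * ε j) * Real.cos (2 * π * r)
          - Real.sin (2 * π * ε j) * Real.sin (2 * π * r) := by
      rw [cos_two_pi_fract, mul_add, Real.cos_add]
    have hs : Real.sin (2 * π * Int.fract (ε j + r))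
        = Real.sin (2 * π * ε j) * Real.cos (2 * π * r)
          + Real.cos (2 * π * ε j) * Real.sin (2 * π * r) := by
      rw [sin_two_pi_fract, mul_add, Real.sin_add]
    have hpy : Real.sin (2 * π * r) ^ 2 + Real.cos (2 * π * r) ^ 2 = 1 :=
      Real.sin_sq_add_cos_sq _
    simp only [gfun, hx, hy, hc, hs]
    have hnum : (Real.cos (2 * π * r) * xbar ε - Real.sin (2 * π * r) * ybar ε) *
          (Real.cos (2 * π * ε j) * Real.cos (2 * π * r)
            - Real.sin (2 * π * ε j) * Real.sin (2 * π * r))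
        + (Real.sin (2 * π * r) * xbar ε + Real.cos (2 * π * r) * ybar ε) *
          (Real.sin (2 * π * ε j) * Real.cos (2 * π * r)
            + Real.cos (2 * π * ε j) * Real.sin (2 * π * r))
        = xbar ε * Real.cos (2 * π * ε j) + ybar ε * Real.sin (2 * π * ε j) := by
      linear_combination (xbar ε * Real.cos (2 * π * ε j) + ybar ε * Real.sin (2 * π * ε j)) * hpy
    have hden : (Real.cos (2 * π * r) * xbar ε - Real.sin (2 * π * r) * ybar ε) ^ 2
        + (Real.sin (2 * π * r) * xbar ε + Real.cos (2 * π * r) * ybar ε) ^ 2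
        = xbar ε ^ 2 + ybar ε ^ 2 := by
      linear_combination (xbar ε ^ 2 + ybar ε ^ 2) * hpy
    rw [hnum, hden]
  funext j
  rw [key j]
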